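/- Let (x_j)_{j∈J} be a frame of a Hilbert space H with upper frame bound B, let ε > 0, and let (y_j)_{j∈J} be a family of vectors in H with Σ_{j∈J} ‖x_j − y_j‖² < ε. Then for every x ∈ H one has Σ_{j∈J} |⟨x, y_j⟩|² ≥ Σ_{j∈J} |⟨x, x_j⟩|² − 2 B^{1/2} ε^{1/2} ‖x‖². -/
import Mathlib


open scoped ComplexInnerProductSpace

set_option maxHeartbeats 1000000 in
/-- If `(x j)` is a frame of a Hilbert space `H` with upper frame bound `B`, `ε > 0`, and
`(y j)` satisfies `∑ ‖x j - y j‖² < ε`, then for every `u ∈ H`,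
`∑ⱼ |⟨u,yⱼ⟩|² ≥ ∑ⱼ |⟨u,xⱼ⟩|² - 2 B^{1/2} ε^{1/2} ‖u‖²`. -/
theorem stmt_5 {H : Type*} [NormedAddCommGroup H] [InnerProductSpace ℂ H] [CompleteSpace H]
    {J : Type*} (x y : J → H) (B ε : ℝ) (hB : 0 < B)
    (hx_summable : ∀ u : H, Summable fun j => ‖⟪u, x j⟫‖ ^ 2)
    (hx_upper : ∀ u : H, ∑' j, ‖⟪u, x j⟫‖ ^ 2 ≤ B * ‖u‖ ^ 2)
    (hε : 0 < ε)
    (hpert_summable : Summable fun j => ‖x j - y j‖ ^ 2)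
    (hpert : ∑' j, ‖x j - y j‖ ^ 2 < ε) :
    ∀ u : H,
      (∑' j, ‖⟪u, x j⟫‖ ^ 2) - 2 * Real.sqrt B * Real.sqrt ε * ‖u‖ ^ 2 ≤
        ∑' j, ‖⟪u, y j⟫‖ ^ 2 := by
  intro u
  set a : J → ℝ := fun j => ‖⟪u, x j⟫‖ with ha_def
  set b : J → ℝ := fun j => ‖⟪u, y j⟫‖ with hb_def
  set c : J → ℝ := fun j => ‖u‖ * ‖x j - y j‖ with hc_def
  have ha0 : ∀ j, 0 ≤ a j := fun j => norm_nonneg _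
  have hb0 : ∀ j, 0 ≤ b j := fun j => norm_nonneg _
  have hc0 : ∀ j, 0 ≤ c j := fun j => mul_nonneg (norm_nonneg _) (norm_nonneg _)
  -- key pointwise bounds
  have hab : ∀ j, a j ≤ b j + c j := by
    intro j
    have h1 : ⟪u, x j⟫ = ⟪u, y j⟫ + ⟪u, x j - y j⟫ := by
      rw [← inner_add_right]; congr 1; abel
    have h2 : ‖⟪u, x j - y j⟫‖ ≤ ‖u‖ * ‖x j - y j‖ := norm_inner_le_norm _ _
    calc a j = ‖⟪u, y j⟫ + ⟪u, x j - y j⟫‖ := by rw [ha_def]; rw [← h1]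
      _ ≤ ‖⟪u, y j⟫‖ + ‖⟪u, x j - y j⟫‖ := norm_add_le _ _
      _ ≤ b j + c j := by exact add_le_add le_rfl h2
  have hba : ∀ j, b j ≤ a j + c j := by
    intro j
    have h1 : ⟪u, y j⟫ = ⟪u, x j⟫ - ⟪u, x j - y j⟫ := by
      rw [← inner_sub_right]; congr 1; abel
    have h2 : ‖⟪u, x j - y j⟫‖ ≤ ‖u‖ * ‖x j - y j‖ := norm_inner_le_norm _ _
    calc b j = ‖⟪u, x j⟫ - ⟪u, x j - y j⟫‖ := by rw [hb_def]; rw [← h1]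
      _ ≤ ‖⟪u, x j⟫‖ + ‖⟪u, x j - y j⟫‖ := norm_sub_le _ _
      _ ≤ a j + c j := by exact add_le_add le_rfl h2
  -- summability facts
  have ha2 : Summable fun j => a j ^ 2 := hx_summable u
  have hc2 : Summable fun j => c j ^ 2 := by
    have := hpert_summable.mul_left (‖u‖ ^ 2)
    simpa [hc_def, mul_pow] using this
  have hb2 : Summable fun j => b j ^ 2 := by
    refine Summable.of_nonneg_of_le (fun j => sq_nonneg _) (fun j => ?_)
      ((ha2.mul_left 2).add (hc2.mul_left 2))
    have h1 := hba j
    have h2 : b j * b j ≤ (a j + c j) * (a j + c j) :=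
      mul_self_le_mul_self (hb0 j) h1
    nlinarith [sq_nonneg (a j - c j)]
  have hac : Summable fun j => a j * c j := by
    refine Summable.of_nonneg_of_le (fun j => mul_nonneg (ha0 j) (hc0 j)) (fun j => ?_)
      (ha2.add hc2)
    nlinarith [sq_nonneg (a j - c j)]
  -- pointwise: a² - b² ≤ 2 a c
  have hkey : ∀ j, a j ^ 2 - b j ^ 2 ≤ 2 * (a j * c j) := by
    intro j
    rcases le_or_gt (c j) (a j) with h | h
    · have hb' : a j - c j ≤ b j := by linarith [hab j]
      nlinarith [hb0 j, hc0 j]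
    · nlinarith [ha0 j, hb0 j, sq_nonneg (b j)]
  -- Cauchy–Schwarz for the tsum
  have htsum_a2 : (0:ℝ) ≤ ∑' j, a j ^ 2 := tsum_nonneg fun j => sq_nonneg _
  have htsum_c2 : (0:ℝ) ≤ ∑' j, c j ^ 2 := tsum_nonneg fun j => sq_nonneg _
  have hCS : ∑' j, a j * c j ≤ Real.sqrt (∑' j, a j ^ 2) * Real.sqrt (∑' j, c j ^ 2) := by
    apply Summable.tsum_le_of_sum_le hac
    intro s
    calc ∑ j ∈ s, a j * c j
        ≤ Real.sqrt (∑ j ∈ s, a j ^ 2) * Real.sqrt (∑ j ∈ s, c j ^ 2) :=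
          Real.sum_mul_le_sqrt_mul_sqrt s a c
      _ ≤ Real.sqrt (∑' j, a j ^ 2) * Real.sqrt (∑' j, c j ^ 2) := by
          apply mul_le_mul (Real.sqrt_le_sqrt ?_) (Real.sqrt_le_sqrt ?_)
            (Real.sqrt_nonneg _) (Real.sqrt_nonneg _)
          · exact Summable.sum_le_tsum s (fun j _ => sq_nonneg _) ha2
          · exact Summable.sum_le_tsum s (fun j _ => sq_nonneg _) hc2
  -- bounds on the two square roots
  have h1 : Real.sqrt (∑' j, a j ^ 2) ≤ Real.sqrt B * ‖u‖ := by
    have : (∑' j, a j ^ 2) ≤ B * ‖u‖ ^ 2 := hx_upper u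
    calc Real.sqrt (∑' j, a j ^ 2) ≤ Real.sqrt (B * ‖u‖ ^ 2) := Real.sqrt_le_sqrt this
      _ = Real.sqrt B * ‖u‖ := by
          rw [Real.sqrt_mul hB.le, Real.sqrt_sq (norm_nonneg _)]
  have h2 : Real.sqrt (∑' j, c j ^ 2) ≤ Real.sqrt ε * ‖u‖ := by
    have hc2eq : (∑' j, c j ^ 2) = ‖u‖ ^ 2 * ∑' j, ‖x j - y j‖ ^ 2 := by
      rw [← tsum_mul_left]
      congr 1 with j
      simp [hc_def, mul_pow]
    have : (∑' j, c j ^ 2) ≤ ε * ‖u‖ ^ 2 := by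
      rw [hc2eq]
      calc ‖u‖ ^ 2 * ∑' j, ‖x j - y j‖ ^ 2 ≤ ‖u‖ ^ 2 * ε := by
            exact mul_le_mul_of_nonneg_left hpert.le (sq_nonneg _)
        _ = ε * ‖u‖ ^ 2 := by ring
    calc Real.sqrt (∑' j, c j ^ 2) ≤ Real.sqrt (ε * ‖u‖ ^ 2) := Real.sqrt_le_sqrt this
      _ = Real.sqrt ε * ‖u‖ := by
          rw [Real.sqrt_mul hε.le, Real.sqrt_sq (norm_nonneg _)]
  -- combine
  have hmain : (∑' j, a j ^ 2) - (∑' j, b j ^ 2) ≤ 2 * Real.sqrt B * Real.sqrt ε * ‖u‖ ^ 2 := by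
    have hsub : (∑' j, a j ^ 2) - (∑' j, b j ^ 2) = ∑' j, (a j ^ 2 - b j ^ 2) :=
      (Summable.tsum_sub ha2 hb2).symm
    rw [hsub]
    calc ∑' j, (a j ^ 2 - b j ^ 2) ≤ ∑' j, 2 * (a j * c j) :=
          Summable.tsum_le_tsum hkey (ha2.sub hb2) (hac.mul_left 2)
      _ = 2 * ∑' j, a j * c j := tsum_mul_left
      _ ≤ 2 * (Real.sqrt (∑' j, a j ^ 2) * Real.sqrt (∑' j, c j ^ 2)) := by linarith
      _ ≤ 2 * ((Real.sqrt B * ‖u‖) * (Real.sqrt ε * ‖u‖)) := by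
          apply mul_le_mul_of_nonneg_left _ (by norm_num)
          exact mul_le_mul h1 h2 (Real.sqrt_nonneg _)
            (mul_nonneg (Real.sqrt_nonneg _) (norm_nonneg _))
      _ = 2 * Real.sqrt B * Real.sqrt ε * ‖u‖ ^ 2 := by ring
  linarith
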